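/- arXiv:1610.05680 — 2 statements merged into one kernel-verified Lean document; each statement's English description precedes it below -/
import Mathlib

section
/- Let Ω be either ℝ³ or the half-space ℝ³₊={x∈ℝ³ : x₃>0}, let λ>1 and φ∈ℝ, and let f∈L³_w(Ω;ℝ³) be RDSS with factor λ and phase φ, i.e. f(x)=λ R(−φ) f(λ R(φ) x) for a.e. x∈Ω. Let x₀∈ℝ³, C₀>0, and let g:Ω→ℝ be measurable with |g(y)| ≤ C₀ (1+|x₀−y|)^{−3} for a.e. y∈Ω. Then ∫_Ω |g(y)| |f(y)| dy < ∞. -/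
open MeasureTheory Set
open scoped ENNReal

noncomputable section

/-- ℝ³ realized as functions `Fin 3 → ℝ`. -/
abbrev V3 := Fin 3 → ℝ

/-- Rotation by angle `s` about the x₃-axis. -/
def rot (s : ℝ) : Matrix (Fin 3) (Fin 3) ℝ :=
  !![Real.cos s, -Real.sin s, 0; Real.sin s, Real.cos s, 0; 0, 0, 1]

/-- Squared Euclidean norm on ℝ³. -/
def nsq (x : V3) : ℝ := ∑ i, (x i) ^ 2

/-- Euclidean norm on ℝ³. -/
def en (x : V3) : ℝ := Real.sqrt (nsq x)

/-- The open half space ℝ³₊. -/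
def halfSpace : Set V3 := {x : V3 | 0 < x 2}

lemma continuous_en : Continuous en := by
  unfold en nsq
  exact Real.continuous_sqrt.comp (continuous_finset_sum _ fun i _ => (continuous_apply i).pow 2)

lemma en_nonneg (x : V3) : 0 ≤ en x := Real.sqrt_nonneg _

lemma abs_coord_le_en (x : V3) (i : Fin 3) : |x i| ≤ en x := by
  rw [← Real.sqrt_sq_eq_abs]
  apply Real.sqrt_le_sqrt
  exact Finset.single_le_sum (f := fun j => (x j) ^ 2) (fun j _ => sq_nonneg _) (Finset.mem_univ i)

lemma tail_lintegral (C M : ℝ) (hC : 0 ≤ C) (hM : 0 < M) :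
    ∫⁻ t in Ioi M, ENNReal.ofReal (C / t ^ 3) ≤ ENNReal.ofReal (C * (M ^ (2:ℕ))⁻¹ / 2) := by
  have hrw : ∀ t ∈ Ioi M, ENNReal.ofReal (C / t ^ 3) = ENNReal.ofReal (C * t ^ (-3 : ℝ)) := by
    intro t ht
    have ht0 : 0 < t := hM.trans ht
    congr 1
    rw [show ((-3:ℝ)) = -((3:ℕ):ℝ) from by norm_num, Real.rpow_neg ht0.le, Real.rpow_natCast]
    ring
  rw [setLIntegral_congr_fun measurableSet_Ioi hrw]
  have hint : IntegrableOn (fun t : ℝ => C * t ^ (-3 : ℝ)) (Ioi M) :=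
    (integrableOn_Ioi_rpow_of_lt (by norm_num) hM).const_mul C
  have hnn : 0 ≤ᵐ[volume.restrict (Ioi M)] fun t : ℝ => C * t ^ (-3 : ℝ) := by
    filter_upwards [ae_restrict_mem measurableSet_Ioi] with t ht
    exact mul_nonneg hC (Real.rpow_nonneg (hM.trans ht).le _)
  rw [← ofReal_integral_eq_lintegral_ofReal hint hnn]
  apply ENNReal.ofReal_le_ofReal
  rw [MeasureTheory.integral_const_mul, integral_Ioi_rpow_of_lt (by norm_num) hM]
  have : -M ^ ((-3:ℝ) + 1) / ((-3:ℝ) + 1) = (M ^ (2:ℕ))⁻¹ / 2 := by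
    rw [show ((-3:ℝ)+1) = -((2:ℕ):ℝ) from by norm_num, Real.rpow_neg hM.le, Real.rpow_natCast]
    ring
  rw [this]; ring_nf; exact le_refl _

lemma key_layercake (E : Set V3) (h : V3 → ℝ) (hh : Measurable h)
    (hnn : ∀ y, 0 ≤ h y) (V C M : ℝ) (hM : 0 < M) (hC : 0 ≤ C) (hV : 0 ≤ V)
    (hVol : volume E ≤ ENNReal.ofReal V)
    (hweak : ∀ σ : ℝ, 0 < σ → volume {y | y ∈ E ∧ σ < h y} ≤ ENNReal.ofReal (C / σ ^ 3)) :
    ∫⁻ y in E, ENNReal.ofReal (h y) ≤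
      ENNReal.ofReal (V * M) + ENNReal.ofReal (C * (M ^ (2:ℕ))⁻¹ / 2) := by
  rw [lintegral_eq_lintegral_meas_lt (volume.restrict E)
      (Filter.Eventually.of_forall hnn) hh.aemeasurable]
  have hmeas : ∀ t : ℝ, (volume.restrict E) {a | t < h a} ≤ volume {y | y ∈ E ∧ t < h y} := by
    intro t
    rw [Measure.restrict_apply (measurableSet_lt measurable_const hh)]
    apply le_of_eq; congr 1; ext y; simp [mem_setOf_eq, and_comm]
  have hsplit : Ioi (0:ℝ) = Ioc 0 M ∪ Ioi M := (Ioc_union_Ioi_eq_Ioi hM.le).symm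
  rw [hsplit, lintegral_union measurableSet_Ioi (Ioc_disjoint_Ioi le_rfl)]
  gcongr
  · calc ∫⁻ t in Ioc (0:ℝ) M, (volume.restrict E) {a | t < h a}
        ≤ ∫⁻ _ in Ioc (0:ℝ) M, ENNReal.ofReal V := by
          apply lintegral_mono
          intro t
          exact le_trans (hmeas t) (le_trans (measure_mono (fun y hy => hy.1)) hVol)
      _ = ENNReal.ofReal V * volume (Ioc (0:ℝ) M) := setLIntegral_const _ _
      _ = ENNReal.ofReal (V * M) := by
          rw [Real.volume_Ioc, ← ENNReal.ofReal_mul hV]; norm_num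
  · calc ∫⁻ t in Ioi M, (volume.restrict E) {a | t < h a}
        ≤ ∫⁻ t in Ioi M, ENNReal.ofReal (C / t ^ 3) := by
          apply setLIntegral_mono (by measurability)
          intro t ht
          exact le_trans (hmeas t) (hweak t (hM.trans ht))
      _ ≤ _ := tail_lintegral C M hC hM

/-- The core estimate in the proof of Lemma 3.3: an RDSS field in weak L³(Ω) pairs
absolutely against any kernel with cubic decay `|g(y)| ≤ C₀ (1+|x₀−y|)^{−3}`. -/
theorem rdss_pairing_cubic_decay
    (Ω : Set V3) (hΩ : Ω = univ ∨ Ω = halfSpace)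
    (lam φ : ℝ) (hlam : 1 < lam)
    (f : V3 → V3) (hf : Measurable f)
    (hrdss : ∀ᵐ x : V3 ∂volume, x ∈ Ω →
      f x = lam • (rot (-φ)).mulVec (f (lam • (rot φ).mulVec x)))
    (hweakL3 : ∃ C : ℝ, ∀ σ : ℝ, 0 < σ →
      volume {x : V3 | x ∈ Ω ∧ σ < en (f x)} ≤ ENNReal.ofReal (C / σ ^ 3))
    (x₀ : V3) (C₀ : ℝ) (hC₀ : 0 < C₀)
    (g : V3 → ℝ) (hg : Measurable g)
    (hgbound : ∀ᵐ y : V3 ∂volume, y ∈ Ω → |g y| ≤ C₀ / (1 + en (x₀ - y)) ^ 3) :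
    ∫⁻ y in Ω, ENNReal.ofReal (|g y| * en (f y)) < ⊤ := by
  obtain ⟨C, hweak⟩ := hweakL3
  set C' : ℝ := max C 1 with hC'def
  have hC'pos : (0:ℝ) < C' := lt_of_lt_of_le one_pos (le_max_right _ _)
  have hweak' : ∀ σ : ℝ, 0 < σ →
      volume {x : V3 | x ∈ Ω ∧ σ < en (f x)} ≤ ENNReal.ofReal (C' / σ ^ 3) := by
    intro σ hσ
    refine (hweak σ hσ).trans (ENNReal.ofReal_le_ofReal ?_)
    rw [div_eq_mul_inv, div_eq_mul_inv]
    exact mul_le_mul_of_nonneg_right (le_max_left C 1) (by positivity)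
  have hΩm : MeasurableSet Ω := by
    rcases hΩ with h | h <;> subst h
    · exact MeasurableSet.univ
    · exact measurableSet_lt measurable_const (measurable_pi_apply 2)
  have henf : Measurable fun y => en (f y) := continuous_en.measurable.comp hf
  have hcont : Continuous fun y : V3 => 1 + en (x₀ - y) :=
    continuous_const.add (continuous_en.comp (continuous_const.sub continuous_id))
  set A : ℕ → Set V3 :=
    fun k => {y : V3 | (2:ℝ)^k ≤ 1 + en (x₀ - y) ∧ 1 + en (x₀ - y) < 2^(k+1)} with hAdef
  have hAm : ∀ k, MeasurableSet (A k) := by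
    intro k
    have : A k = (fun y : V3 => 1 + en (x₀ - y)) ⁻¹' (Ico ((2:ℝ)^k) (2^(k+1))) := rfl
    rw [this]
    exact hcont.measurable measurableSet_Ico
  have hcover : Ω ⊆ ⋃ k, Ω ∩ A k := by
    intro y hy
    set v := 1 + en (x₀ - y) with hv
    have hv1 : 1 ≤ v := le_add_of_nonneg_right (en_nonneg _)
    have hex : ∃ n : ℕ, v < 2^n := pow_unbounded_of_one_lt v one_lt_two
    have hm : v < 2 ^ Nat.find hex := Nat.find_spec hex
    have hfind0 : Nat.find hex ≠ 0 := by
      intro h0; rw [h0, pow_zero] at hm; linarith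
    refine mem_iUnion.2 ⟨Nat.find hex - 1, hy, ?_, ?_⟩
    · exact not_lt.1 (Nat.find_min hex (by omega))
    · have h1 : Nat.find hex - 1 + 1 = Nat.find hex := by omega
      rw [h1]; exact hm
  -- volume of each annulus
  have hVol : ∀ k, volume (Ω ∩ A k) ≤ ENNReal.ofReal ((2:ℝ)^(3*k+6)) := by
    intro k
    have hsub : Ω ∩ A k ⊆
        Set.pi univ (fun i => Ioo (x₀ i - 2^(k+1)) (x₀ i + 2^(k+1))) := by
      rintro y ⟨-, h1, h2⟩ i -
      have hen : en (x₀ - y) < 2^(k+1) := by linarith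
      have hx : |x₀ i - y i| < 2^(k+1) :=
        lt_of_le_of_lt (abs_coord_le_en (x₀ - y) i) hen
      obtain ⟨ha, hb⟩ := abs_lt.1 hx
      exact ⟨by linarith, by linarith⟩
    calc volume (Ω ∩ A k) ≤ volume (Set.pi univ fun i => Ioo (x₀ i - 2^(k+1)) (x₀ i + 2^(k+1))) :=
          measure_mono hsub
      _ = ∏ i : Fin 3, volume (Ioo (x₀ i - 2^(k+1)) (x₀ i + 2^(k+1))) := volume_pi_pi _
      _ = ENNReal.ofReal ((2:ℝ)^(3*k+6)) := by
          have h1 : ∀ i : Fin 3, volume (Ioo (x₀ i - 2^(k+1)) (x₀ i + 2^(k+1)))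
              = ENNReal.ofReal ((2:ℝ)^(k+2)) := by
            intro i
            rw [Real.volume_Ioo]
            congr 1
            ring
          simp_rw [h1]
          rw [Finset.prod_const, ← ENNReal.ofReal_pow (by positivity)]
          congr 1
          simp only [Finset.card_univ, Fintype.card_fin]
          rw [← pow_mul]
          congr 1
          ring
  -- per-annulus estimate
  set K : ℝ := C₀ * (64 + C'/2) with hKdef
  have hterm : ∀ k : ℕ, ∫⁻ y in Ω ∩ A k, ENNReal.ofReal (|g y| * en (f y))
      ≤ ENNReal.ofReal K * ENNReal.ofReal (1/2) ^ k := by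
    intro k
    have hEm : MeasurableSet (Ω ∩ A k) := hΩm.inter (hAm k)
    have hck : (0:ℝ) ≤ C₀ * ((1/2:ℝ))^(3*k) := by positivity
    have step1 : ∫⁻ y in Ω ∩ A k, ENNReal.ofReal (|g y| * en (f y))
        ≤ ENNReal.ofReal (C₀ * ((1/2:ℝ))^(3*k)) * ∫⁻ y in Ω ∩ A k, ENNReal.ofReal (en (f y)) := by
      rw [← lintegral_const_mul' _ _ ENNReal.ofReal_ne_top]
      apply lintegral_mono_ae
      filter_upwards [ae_restrict_mem hEm, ae_restrict_of_ae hgbound] with y hyE hyg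
      rw [← ENNReal.ofReal_mul hck]
      apply ENNReal.ofReal_le_ofReal
      have h2k : (2:ℝ)^k ≤ 1 + en (x₀ - y) := hyE.2.1
      have hgb : |g y| ≤ C₀ * ((1/2:ℝ))^(3*k) := by
        refine le_trans (hyg hyE.1) ?_
        have heq : C₀ * ((1/2:ℝ))^(3*k) = C₀ / ((2:ℝ)^k)^3 := by
          rw [one_div, inv_pow, pow_mul']
          ring
        rw [heq]
        have hp : ((2:ℝ)^k)^3 ≤ (1 + en (x₀ - y))^3 :=
          pow_le_pow_left₀ (by positivity) h2k 3
        exact div_le_div_of_nonneg_left hC₀.le (by positivity) hp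
      exact mul_le_mul_of_nonneg_right hgb (en_nonneg _)
    have hweakE : ∀ σ : ℝ, 0 < σ →
        volume {y | y ∈ Ω ∩ A k ∧ σ < en (f y)} ≤ ENNReal.ofReal (C' / σ ^ 3) := by
      intro σ hσ
      refine le_trans (measure_mono fun y hy => ?_) (hweak' σ hσ)
      exact ⟨hy.1.1, hy.2⟩
    have step2 := key_layercake (Ω ∩ A k) (fun y => en (f y)) henf (fun y => en_nonneg _)
      ((2:ℝ)^(3*k+6)) C' (((1/2:ℝ))^k) (by positivity) hC'pos.le (by positivity)
      (hVol k) hweakE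
    calc ∫⁻ y in Ω ∩ A k, ENNReal.ofReal (|g y| * en (f y))
        ≤ ENNReal.ofReal (C₀ * ((1/2:ℝ))^(3*k)) *
          (ENNReal.ofReal ((2:ℝ)^(3*k+6) * ((1/2:ℝ))^k)
            + ENNReal.ofReal (C' * ((((1/2:ℝ))^k) ^ (2:ℕ))⁻¹ / 2)) := by
          exact le_trans step1 (mul_le_mul_right step2 _)
      _ ≤ ENNReal.ofReal K * ENNReal.ofReal (1/2) ^ k := by
          rw [← ENNReal.ofReal_add (by positivity) (by positivity),
            ← ENNReal.ofReal_mul hck, ← ENNReal.ofReal_pow (by norm_num),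
            ← ENNReal.ofReal_mul (by positivity)]
          apply ENNReal.ofReal_le_ofReal
          have hb : ((1/2:ℝ))^k = ((2:ℝ)^k)⁻¹ := by rw [one_div, inv_pow]
          have h3k : ((1/2:ℝ))^(3*k) = (((2:ℝ)^k)^3)⁻¹ := by
            rw [one_div, inv_pow, pow_mul']
          have h2k6 : (2:ℝ)^(3*k+6) = 64 * ((2:ℝ)^k)^3 := by
            rw [pow_add, pow_mul']; ring
          rw [hb, h3k, h2k6, hKdef]
          have ha : (0:ℝ) < 2^k := by positivity
          apply le_of_eq
          field_simp
  -- sum up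
  have hmain : ∫⁻ y in Ω, ENNReal.ofReal (|g y| * en (f y))
      ≤ ENNReal.ofReal K * (1 - ENNReal.ofReal (1/2))⁻¹ := by
    calc ∫⁻ y in Ω, ENNReal.ofReal (|g y| * en (f y))
        ≤ ∫⁻ y in ⋃ k, Ω ∩ A k, ENNReal.ofReal (|g y| * en (f y)) := lintegral_mono_set hcover
      _ ≤ ∑' k, ∫⁻ y in Ω ∩ A k, ENNReal.ofReal (|g y| * en (f y)) := lintegral_iUnion_le _ _
      _ ≤ ∑' k : ℕ, ENNReal.ofReal K * ENNReal.ofReal (1/2) ^ k := ENNReal.tsum_le_tsum hterm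
      _ = ENNReal.ofReal K * (1 - ENNReal.ofReal (1/2))⁻¹ := by
          rw [ENNReal.tsum_mul_left, ENNReal.tsum_geometric]
  refine lt_of_le_of_lt hmain ?_
  apply ENNReal.mul_lt_top ENNReal.ofReal_lt_top
  rw [ENNReal.inv_lt_top, tsub_pos_iff_lt]
  exact ENNReal.ofReal_lt_one.2 (by norm_num)
end
end

section
/- Let λ>1 and φ∈ℝ, let v₀∈L³_w(ℝ³;ℝ³) be RDSS with factor λ and phase φ, i.e. v₀(x)=λ R(−φ) v₀(λ R(φ) x) for a.e. x∈ℝ³, and let q∈(3,∞). Then the function x ↦ sup_{1≤t≤λ²} |(e^{tΔ}v₀)(x)| belongs to L^q(ℝ³), i.e. ∫_{ℝ³} ( sup_{1≤t≤λ²} |(e^{tΔ}v₀)(x)| )^q dx < ∞. -/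
open MeasureTheory Set
open scoped ENNReal

noncomputable section

/-- Membership in weak L³(ℝ³). -/
def MemWeakL3 (f : V3 → V3) : Prop :=
  ∃ C : ℝ, ∀ σ : ℝ, 0 < σ →
    volume {x : V3 | σ < en (f x)} ≤ ENNReal.ofReal (C / σ ^ 3)

/-- Caloric extension `e^{tΔ}v₀` of `v₀`. -/
def heat (v₀ : V3 → V3) (t : ℝ) (x : V3) : V3 :=
  fun i => ∫ y : V3, (4 * Real.pi * t) ^ (-(3 : ℝ) / 2) *
    Real.exp (-(nsq (x - y)) / (4 * t)) * v₀ y i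

/-! ### Auxiliary lemmas -/

lemma nsq_nonneg (x : V3) : 0 ≤ nsq x := Finset.sum_nonneg fun _ _ => sq_nonneg _

lemma measurable_nsq : Measurable nsq := by
  unfold nsq
  exact Finset.measurable_sum _ fun i _ => (measurable_pi_apply i).pow measurable_const

lemma en_le_sum (u : V3) : en u ≤ |u 0| + |u 1| + |u 2| := by
  rw [en, show nsq u = u 0 ^ 2 + u 1 ^ 2 + u 2 ^ 2 by simp [nsq, Fin.sum_univ_three]]
  rw [show |u 0| + |u 1| + |u 2| = Real.sqrt ((|u 0| + |u 1| + |u 2|) ^ 2) by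
    rw [Real.sqrt_sq (by positivity)]]
  apply Real.sqrt_le_sqrt
  have h0 := abs_nonneg (u 0); have h1 := abs_nonneg (u 1); have h2 := abs_nonneg (u 2)
  nlinarith [sq_abs (u 0), sq_abs (u 1), sq_abs (u 2)]

lemma abs_apply_le_en (u : V3) (i : Fin 3) : |u i| ≤ en u := by
  rw [en, ← Real.sqrt_sq_eq_abs]
  apply Real.sqrt_le_sqrt
  exact Finset.single_le_sum (f := fun j => u j ^ 2) (fun j _ => sq_nonneg _) (Finset.mem_univ i)

/-- Finiteness of Gaussian integrals on `V3`. -/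
lemma gauss_lt_top {a : ℝ} (ha : 0 < a) :
    ∫⁻ x : V3, ENNReal.ofReal (Real.exp (-(a * nsq x))) < ⊤ := by
  have h1 : Integrable (fun x : V3 => ∏ i, Real.exp (-a * (x i) ^ 2)) volume :=
    Integrable.fintype_prod (fun _ => integrable_exp_neg_mul_sq ha)
  have h2 : ∀ x : V3, Real.exp (-(a * nsq x)) = ∏ i, Real.exp (-a * (x i) ^ 2) := by
    intro x
    rw [← Real.exp_sum]
    congr 1
    simp [nsq, Finset.mul_sum]
  calc ∫⁻ x : V3, ENNReal.ofReal (Real.exp (-(a * nsq x)))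
      = ∫⁻ x : V3, ‖∏ i, Real.exp (-a * (x i) ^ 2)‖₊ := by
        refine lintegral_congr fun x => ?_
        rw [← h2, ← enorm_eq_nnnorm, Real.enorm_eq_ofReal_abs, abs_of_pos (Real.exp_pos _)]
    _ < ⊤ := h1.2

lemma tail_int_lt_top {C : ℝ} :
    ∫⁻ t in Ioi (1:ℝ), ENNReal.ofReal (C / t ^ 3) < ⊤ := by
  have hint : IntegrableOn (fun t : ℝ => C * t ^ (-3 : ℝ)) (Ioi 1) volume :=
    (integrableOn_Ioi_rpow_of_lt (by norm_num) one_pos).const_mul C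
  calc ∫⁻ t in Ioi (1:ℝ), ENNReal.ofReal (C / t ^ 3)
      ≤ ∫⁻ t in Ioi (1:ℝ), ‖C * t ^ (-3 : ℝ)‖₊ := by
        refine setLIntegral_mono (by fun_prop) fun t ht => ?_
        have ht0 : (0:ℝ) < t := lt_trans one_pos ht
        have : C / t ^ 3 = C * t ^ (-3 : ℝ) := by
          rw [Real.rpow_neg ht0.le, show ((3:ℝ)) = ((3:ℕ):ℝ) by norm_num,
            Real.rpow_natCast, div_eq_mul_inv]
        rw [this, ← enorm_eq_nnnorm, Real.enorm_eq_ofReal_abs]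
        exact ENNReal.ofReal_le_ofReal (le_abs_self _)
    _ < ⊤ := hint.2

lemma head_int_lt_top {C r : ℝ} (hr : -1 < r) :
    ∫⁻ t in Ioc (0:ℝ) 1, ENNReal.ofReal (C * t ^ r) < ⊤ := by
  have hint : IntegrableOn (fun t : ℝ => C * t ^ r) (Ioc 0 1) volume :=
    ((intervalIntegral.intervalIntegrable_rpow' hr (a := 0) (b := 1)).1).const_mul C
  calc ∫⁻ t in Ioc (0:ℝ) 1, ENNReal.ofReal (C * t ^ r)
      ≤ ∫⁻ t in Ioc (0:ℝ) 1, ‖C * t ^ r‖₊ := by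
        refine setLIntegral_mono (by fun_prop) fun t _ => ?_
        rw [← enorm_eq_nnnorm, Real.enorm_eq_ofReal_abs]
        exact ENNReal.ofReal_le_ofReal (le_abs_self _)
    _ < ⊤ := hint.2

/-- The part of a weak-L³ function above height 1 is integrable. -/
lemma trunc_big_lt_top {w : V3 → ℝ} (hw : Measurable w) (hw0 : ∀ x, 0 ≤ w x)
    {C : ℝ}
    (hbd : ∀ σ : ℝ, 0 < σ → volume {x : V3 | σ < w x} ≤ ENNReal.ofReal (C / σ ^ 3)) :
    ∫⁻ x, ENNReal.ofReal (if 1 < w x then w x else 0) < ⊤ := by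
  set f : V3 → ℝ := fun x => if 1 < w x then w x else 0 with hf
  have hfm : Measurable f :=
    Measurable.ite (measurableSet_lt measurable_const hw) hw measurable_const
  have hfnn : ∀ x, 0 ≤ f x := fun x => by by_cases h : 1 < w x <;> simp [f, h, hw0 x]
  have key := lintegral_rpow_eq_lintegral_meas_lt_mul volume
    (Filter.Eventually.of_forall hfnn) hfm.aemeasurable one_pos
  simp only [Real.rpow_one, sub_self, Real.rpow_zero, ENNReal.ofReal_one, mul_one] at key
  rw [key, one_mul]
  have hsplit : Ioi (0:ℝ) = Ioc 0 1 ∪ Ioi 1 := (Ioc_union_Ioi_eq_Ioi zero_le_one).symm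
  rw [hsplit, lintegral_union measurableSet_Ioi (Set.Ioc_disjoint_Ioi le_rfl)]
  have h1 : ∫⁻ t in Ioc (0:ℝ) 1, volume {a | t < f a} ≤ ENNReal.ofReal C := by
    calc ∫⁻ t in Ioc (0:ℝ) 1, volume {a | t < f a}
        ≤ ∫⁻ _ in Ioc (0:ℝ) 1, ENNReal.ofReal C := by
          refine setLIntegral_mono measurable_const fun t ht => ?_
          refine le_trans (measure_mono ?_) (by simpa using hbd 1 one_pos)
          intro a ha
          simp only [mem_setOf_eq] at ha ⊢
          by_contra hcon
          simp only [f, if_neg hcon] at ha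
          exact absurd ha (not_lt.2 ht.1.le)
      _ = ENNReal.ofReal C * volume (Ioc (0:ℝ) 1) := setLIntegral_const _ _
      _ ≤ ENNReal.ofReal C := by simp [Real.volume_Ioc]
  have h2 : ∫⁻ t in Ioi (1:ℝ), volume {a | t < f a} < ⊤ := by
    refine lt_of_le_of_lt ?_ (tail_int_lt_top (C := C))
    refine setLIntegral_mono (by fun_prop) fun t ht => ?_
    refine le_trans (measure_mono ?_) (hbd t (lt_trans one_pos ht))
    intro a ha
    simp only [mem_setOf_eq] at ha ⊢
    by_cases h : 1 < w a
    · simpa [f, h] using ha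
    · simp only [f, if_neg h] at ha
      exact absurd ha (not_lt.2 (lt_trans one_pos ht).le)
  exact ENNReal.add_lt_top.2 ⟨lt_of_le_of_lt h1 ENNReal.ofReal_lt_top, h2⟩

/-- The part of a weak-L³ function below height 1 is in `L^q` for `q > 3`. -/
lemma trunc_small_lt_top {w : V3 → ℝ} (hw : Measurable w) (hw0 : ∀ x, 0 ≤ w x)
    {C : ℝ} (hC : 0 ≤ C) {q : ℝ} (hq : 3 < q)
    (hbd : ∀ σ : ℝ, 0 < σ → volume {x : V3 | σ < w x} ≤ ENNReal.ofReal (C / σ ^ 3)) :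
    ∫⁻ x, ENNReal.ofReal ((if 1 < w x then 0 else w x) ^ q) < ⊤ := by
  set f : V3 → ℝ := fun x => if 1 < w x then 0 else w x with hf
  have hfm : Measurable f := Measurable.ite (measurableSet_lt measurable_const hw)
    measurable_const hw
  have hfnn : ∀ x, 0 ≤ f x := fun x => by by_cases h : 1 < w x <;> simp [f, h, hw0 x]
  have hfle : ∀ x, f x ≤ 1 := fun x => by
    by_cases h : 1 < w x
    · simp [f, h]
    · simp only [f, if_neg h]; exact not_lt.1 h
  have hq0 : (0:ℝ) < q := by linarith
  have key := lintegral_rpow_eq_lintegral_meas_lt_mul volume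
    (Filter.Eventually.of_forall hfnn) hfm.aemeasurable hq0
  rw [key]
  refine ENNReal.mul_lt_top ENNReal.ofReal_lt_top ?_
  have hsplit : Ioi (0:ℝ) = Ioc 0 1 ∪ Ioi 1 := (Ioc_union_Ioi_eq_Ioi zero_le_one).symm
  rw [hsplit, lintegral_union measurableSet_Ioi (Set.Ioc_disjoint_Ioi le_rfl)]
  have h2 : ∫⁻ t in Ioi (1:ℝ), volume {a | t < f a} * ENNReal.ofReal (t ^ (q-1)) = 0 := by
    have hz : ∀ t : ℝ, t ∈ Ioi (1:ℝ) →
        volume {a : V3 | t < f a} * ENNReal.ofReal (t ^ (q-1)) = (0:ℝ≥0∞) := by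
      intro t ht
      have : {a : V3 | t < f a} = ∅ := by
        ext a; simp only [mem_setOf_eq, mem_empty_iff_false, iff_false, not_lt]
        exact le_trans (hfle a) (le_of_lt ht)
      simp [this]
    rw [setLIntegral_congr_fun measurableSet_Ioi hz]
    simp
  have h1 : ∫⁻ t in Ioc (0:ℝ) 1, volume {a | t < f a} * ENNReal.ofReal (t ^ (q-1)) < ⊤ := by
    refine lt_of_le_of_lt ?_ (head_int_lt_top (C := C) (r := q - 4) (by linarith))
    refine setLIntegral_mono (by fun_prop) fun t ht => ?_
    have ht0 : (0:ℝ) < t := ht.1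
    have hsub : {a : V3 | t < f a} ⊆ {a : V3 | t < w a} := by
      intro a ha
      simp only [mem_setOf_eq] at ha ⊢
      by_cases h : 1 < w a
      · simp only [f, if_pos h] at ha
        exact absurd ha (not_lt.2 ht0.le)
      · simpa [f, h] using ha
    calc volume {a : V3 | t < f a} * ENNReal.ofReal (t ^ (q-1))
        ≤ ENNReal.ofReal (C / t ^ 3) * ENNReal.ofReal (t ^ (q-1)) :=
          mul_le_mul_left (le_trans (measure_mono hsub) (hbd t ht0)) _
      _ = ENNReal.ofReal (C * t ^ (q-4)) := by
          rw [← ENNReal.ofReal_mul (div_nonneg hC (by positivity))]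
          congr 1
          rw [div_mul_eq_mul_div, mul_comm C, mul_comm _ C, mul_div_assoc]
          congr 1
          rw [← Real.rpow_natCast t 3, ← Real.rpow_sub ht0]
          push_cast
          ring_nf
  rw [h2, add_zero]
  exact h1

lemma refl_lint (f : V3 → ℝ≥0∞) (hf : Measurable f) (x : V3) :
    ∫⁻ y, f (x - y) = ∫⁻ y, f y := by
  calc ∫⁻ y, f (x - y) = ∫⁻ y, f y ∂(Measure.map (fun y => x - y) volume) :=
        (lintegral_map hf (measurable_const.sub measurable_id)).symm
  _ = ∫⁻ y, f y := by rw [Measure.map_sub_left_eq_self volume x]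

/-- Convolution estimate: `‖G ⋆ w‖_q ≤ ‖G‖_q ‖w‖₁` (in `ℝ≥0∞`, raised to the power `q`). -/
lemma conv_pow_le₁ {q q' : ℝ} (hq : Real.HolderConjugate q q')
    {G w : V3 → ℝ≥0∞} (hG : Measurable G) (hw : Measurable w) :
    ∫⁻ x : V3, (∫⁻ y, G (x - y) * w y) ^ q ≤ (∫⁻ z, G z ^ q) * (∫⁻ y, w y) ^ q := by
  have hq0 : (0:ℝ) ≤ q := hq.nonneg
  have hqpos : (0:ℝ) < q := hq.pos
  have hq'pos : (0:ℝ) < q' := hq.symm.pos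
  set B := ∫⁻ y, w y with hB
  set Iq := ∫⁻ z, G z ^ q with hIq
  have hGk : ∀ x : V3, Measurable fun y : V3 => G (x - y) :=
    fun x => hG.comp (measurable_const.sub measurable_id)
  have step1 : ∀ x : V3, (∫⁻ y, G (x - y) * w y) ≤
      (∫⁻ y, G (x - y) ^ q * w y) ^ (1/q) * B ^ (1/q') := by
    intro x
    have h := ENNReal.lintegral_mul_le_Lp_mul_Lq volume hq
      (f := fun y => G (x - y) * (w y) ^ (1/q)) (g := fun y => (w y) ^ (1/q'))
      (((hGk x).mul ((hw.pow_const _))).aemeasurable) ((hw.pow_const _).aemeasurable)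
    have e1 : ∀ y : V3, (fun y => G (x - y) * (w y) ^ (1/q)) y * (fun y => (w y) ^ (1/q')) y
        = G (x - y) * w y := by
      intro y
      rw [mul_assoc, ← ENNReal.rpow_add_of_nonneg _ _ (by positivity) (by positivity)]
      rw [show 1/q + 1/q' = 1 by simpa [one_div] using (Real.HolderConjugate.inv_add_inv_eq_one hq), ENNReal.rpow_one]
    have e2 : ∀ y : V3, ((fun y => G (x - y) * (w y) ^ (1/q)) y) ^ q = G (x - y) ^ q * w y := by
      intro y
      rw [ENNReal.mul_rpow_of_nonneg _ _ hq0, ← ENNReal.rpow_mul,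
        one_div_mul_cancel hqpos.ne', ENNReal.rpow_one]
    have e3 : ∀ y : V3, ((fun y => (w y) ^ (1/q')) y) ^ q' = w y := by
      intro y
      rw [← ENNReal.rpow_mul, one_div_mul_cancel hq'pos.ne', ENNReal.rpow_one]
    calc (∫⁻ y, G (x - y) * w y)
        = ∫⁻ y, ((fun y => G (x - y) * (w y) ^ (1/q)) * fun y => (w y) ^ (1/q')) y := by
          refine lintegral_congr fun y => ?_; rw [Pi.mul_apply, e1]
      _ ≤ (∫⁻ y, ((fun y => G (x - y) * (w y) ^ (1/q)) y) ^ q) ^ (1/q) *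
            (∫⁻ y, ((fun y => (w y) ^ (1/q')) y) ^ q') ^ (1/q') := h
      _ = (∫⁻ y, G (x - y) ^ q * w y) ^ (1/q) * B ^ (1/q') := by
          rw [lintegral_congr e2, lintegral_congr e3]
  have hqq' : 1/q' * q = q - 1 := by
    have h1 : q' = q / (q - 1) := Real.HolderConjugate.conjugate_eq hq
    have h2 : q - 1 ≠ 0 := by intro h; apply (sub_pos.1 (Real.HolderConjugate.sub_one_pos hq)).ne'; linarith
    rw [h1]
    field_simp
  have step2 : ∀ x : V3, (∫⁻ y, G (x - y) * w y) ^ q ≤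
      (∫⁻ y, G (x - y) ^ q * w y) * B ^ (q - 1) := by
    intro x
    calc (∫⁻ y, G (x - y) * w y) ^ q
        ≤ ((∫⁻ y, G (x - y) ^ q * w y) ^ (1/q) * B ^ (1/q')) ^ q :=
          ENNReal.rpow_le_rpow (step1 x) hq0
      _ = (∫⁻ y, G (x - y) ^ q * w y) * B ^ (q - 1) := by
          rw [ENNReal.mul_rpow_of_nonneg _ _ hq0, ← ENNReal.rpow_mul, ← ENNReal.rpow_mul,
            one_div_mul_cancel hqpos.ne', ENNReal.rpow_one, hqq']
  have hmeas2 : Measurable fun x : V3 => ∫⁻ y, G (x - y) ^ q * w y := by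
    apply Measurable.lintegral_prod_right'
      (f := fun p : V3 × V3 => G (p.1 - p.2) ^ q * w p.2)
    exact ((hG.comp (measurable_fst.sub measurable_snd)).pow_const q).mul (hw.comp measurable_snd)
  calc ∫⁻ x, (∫⁻ y, G (x - y) * w y) ^ q
      ≤ ∫⁻ x, (∫⁻ y, G (x - y) ^ q * w y) * B ^ (q - 1) := lintegral_mono step2
    _ = (∫⁻ x, ∫⁻ y, G (x - y) ^ q * w y) * B ^ (q - 1) := lintegral_mul_const _ hmeas2
    _ = (∫⁻ y, ∫⁻ x, G (x - y) ^ q * w y) * B ^ (q - 1) := by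
        rw [lintegral_lintegral_swap]
        exact (((hG.comp (measurable_fst.sub measurable_snd)).pow_const q).mul
          (hw.comp measurable_snd)).aemeasurable
    _ = (∫⁻ y, w y * Iq) * B ^ (q - 1) := by
        congr 1
        refine lintegral_congr fun y => ?_
        rw [lintegral_mul_const (w y) (f := fun x => G (x - y) ^ q)
            ((hG.comp (measurable_id.sub measurable_const)).pow_const q),
          lintegral_sub_right_eq_self (fun z => G z ^ q) y, mul_comm]
    _ = Iq * B * B ^ (q - 1) := by rw [lintegral_mul_const _ hw, mul_comm B Iq]
    _ = Iq * B ^ q := by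
        rw [mul_assoc]
        congr 1
        have h := ENNReal.rpow_add_of_nonneg (x := B) 1 (q-1) zero_le_one
          (by linarith [(sub_pos.1 (Real.HolderConjugate.sub_one_pos hq))])
        rw [ENNReal.rpow_one] at h
        rw [← h]
        norm_num

/-- Convolution estimate: `‖G ⋆ w‖_q ≤ ‖G‖₁ ‖w‖_q` (in `ℝ≥0∞`, raised to the power `q`). -/
lemma conv_pow_le₂ {q q' : ℝ} (hq : Real.HolderConjugate q q')
    {G w : V3 → ℝ≥0∞} (hG : Measurable G) (hw : Measurable w) :
    ∫⁻ x : V3, (∫⁻ y, G (x - y) * w y) ^ q ≤ (∫⁻ z, G z) ^ q * ∫⁻ y, (w y) ^ q := by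
  have hq0 : (0:ℝ) ≤ q := hq.nonneg
  have hqpos : (0:ℝ) < q := hq.pos
  have hq'pos : (0:ℝ) < q' := hq.symm.pos
  set I1 := ∫⁻ z, G z with hI1
  have hGk : ∀ x : V3, Measurable fun y : V3 => G (x - y) :=
    fun x => hG.comp (measurable_const.sub measurable_id)
  have hqq' : 1/q' * q = q - 1 := by
    have h1 : q' = q / (q - 1) := Real.HolderConjugate.conjugate_eq hq
    have h2 : q - 1 ≠ 0 := by intro h; apply (sub_pos.1 (Real.HolderConjugate.sub_one_pos hq)).ne'; linarith
    rw [h1]; field_simp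
  have step1 : ∀ x : V3, (∫⁻ y, G (x - y) * w y) ≤
      I1 ^ (1/q') * (∫⁻ y, G (x - y) * (w y) ^ q) ^ (1/q) := by
    intro x
    have h := ENNReal.lintegral_mul_le_Lp_mul_Lq volume hq.symm
      (f := fun y => G (x - y) ^ (1/q')) (g := fun y => G (x - y) ^ (1/q) * w y)
      (((hGk x).pow_const _).aemeasurable) (((hGk x).pow_const _).mul hw).aemeasurable
    have e1 : ∀ y : V3, G (x - y) ^ (1/q') * (G (x - y) ^ (1/q) * w y) = G (x - y) * w y := by
      intro y
      rw [← mul_assoc, ← ENNReal.rpow_add_of_nonneg _ _ (by positivity) (by positivity),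
        show 1/q' + 1/q = 1 by simpa [one_div, add_comm] using (Real.HolderConjugate.inv_add_inv_eq_one hq),
        ENNReal.rpow_one]
    have e2 : ∀ y : V3, (G (x - y) ^ (1/q')) ^ q' = G (x - y) := by
      intro y
      rw [← ENNReal.rpow_mul, one_div_mul_cancel hq'pos.ne', ENNReal.rpow_one]
    have e3 : ∀ y : V3, (G (x - y) ^ (1/q) * w y) ^ q = G (x - y) * (w y) ^ q := by
      intro y
      rw [ENNReal.mul_rpow_of_nonneg _ _ hq0, ← ENNReal.rpow_mul,
        one_div_mul_cancel hqpos.ne', ENNReal.rpow_one]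
    calc (∫⁻ y, G (x - y) * w y)
        = ∫⁻ y, ((fun y => G (x - y) ^ (1/q')) * fun y => G (x - y) ^ (1/q) * w y) y := by
          refine lintegral_congr fun y => ?_; rw [Pi.mul_apply, e1]
      _ ≤ (∫⁻ y, (G (x - y) ^ (1/q')) ^ q') ^ (1/q') *
            (∫⁻ y, (G (x - y) ^ (1/q) * w y) ^ q) ^ (1/q) := h
      _ = I1 ^ (1/q') * (∫⁻ y, G (x - y) * (w y) ^ q) ^ (1/q) := by
          rw [lintegral_congr e2, lintegral_congr e3, refl_lint G hG x]
  have step2 : ∀ x : V3, (∫⁻ y, G (x - y) * w y) ^ q ≤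
      I1 ^ (q - 1) * (∫⁻ y, G (x - y) * (w y) ^ q) := by
    intro x
    calc (∫⁻ y, G (x - y) * w y) ^ q
        ≤ (I1 ^ (1/q') * (∫⁻ y, G (x - y) * (w y) ^ q) ^ (1/q)) ^ q :=
          ENNReal.rpow_le_rpow (step1 x) hq0
      _ = I1 ^ (q - 1) * (∫⁻ y, G (x - y) * (w y) ^ q) := by
          rw [ENNReal.mul_rpow_of_nonneg _ _ hq0, ← ENNReal.rpow_mul, ← ENNReal.rpow_mul,
            one_div_mul_cancel hqpos.ne', ENNReal.rpow_one, hqq']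
  have hmeas2 : Measurable fun x : V3 => ∫⁻ y, G (x - y) * (w y) ^ q := by
    apply Measurable.lintegral_prod_right'
      (f := fun p : V3 × V3 => G (p.1 - p.2) * (w p.2) ^ q)
    exact (hG.comp (measurable_fst.sub measurable_snd)).mul
      ((hw.comp measurable_snd).pow_const q)
  calc ∫⁻ x, (∫⁻ y, G (x - y) * w y) ^ q
      ≤ ∫⁻ x, I1 ^ (q - 1) * (∫⁻ y, G (x - y) * (w y) ^ q) := lintegral_mono step2
    _ = I1 ^ (q - 1) * ∫⁻ x, ∫⁻ y, G (x - y) * (w y) ^ q := lintegral_const_mul _ hmeas2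
    _ = I1 ^ (q - 1) * ∫⁻ y, ∫⁻ x, G (x - y) * (w y) ^ q := by
        rw [lintegral_lintegral_swap]
        exact ((hG.comp (measurable_fst.sub measurable_snd)).mul
          ((hw.comp measurable_snd).pow_const q)).aemeasurable
    _ = I1 ^ (q - 1) * ∫⁻ y, (w y) ^ q * I1 := by
        congr 1
        refine lintegral_congr fun y => ?_
        calc ∫⁻ x, G (x - y) * (w y) ^ q
            = (∫⁻ x, G (x - y)) * (w y) ^ q :=
              lintegral_mul_const ((w y) ^ q) (f := fun x => G (x - y))
                (hG.comp (measurable_id.sub measurable_const))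
          _ = (w y) ^ q * I1 := by
              rw [lintegral_sub_right_eq_self G y, mul_comm]
    _ = I1 ^ (q - 1) * (I1 * ∫⁻ y, (w y) ^ q) := by
        rw [lintegral_mul_const _ (hw.pow_const q), mul_comm _ I1]
    _ = I1 ^ q * ∫⁻ y, (w y) ^ q := by
        rw [← mul_assoc]
        congr 1
        have h := ENNReal.rpow_add_of_nonneg (x := I1) (q-1) 1
          (by linarith [(sub_pos.1 (Real.HolderConjugate.sub_one_pos hq))]) zero_le_one
        rw [ENNReal.rpow_one] at h
        rw [← h]
        norm_num

/-- Splitting `(a+b)^q ≤ 2^q (a^q + b^q)` in `ℝ≥0∞`. -/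
lemma add_rpow_le_two_rpow (a b : ℝ≥0∞) {q : ℝ} (hq : 0 ≤ q) :
    (a + b) ^ q ≤ 2 ^ q * (a ^ q + b ^ q) := by
  have h1 : a + b ≤ 2 * max a b := by
    rcases le_total a b with h | h
    · calc a + b ≤ b + b := add_le_add_left h b
        _ = 2 * b := (two_mul b).symm
        _ ≤ 2 * max a b := by gcongr; exact le_max_right a b
    · calc a + b ≤ a + a := add_le_add_right h a
        _ = 2 * a := (two_mul a).symm
        _ ≤ 2 * max a b := by gcongr; exact le_max_left a b
  calc (a + b) ^ q ≤ (2 * max a b) ^ q := ENNReal.rpow_le_rpow h1 hq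
    _ = 2 ^ q * (max a b) ^ q := ENNReal.mul_rpow_of_nonneg _ _ hq
    _ ≤ 2 ^ q * (a ^ q + b ^ q) := by
        gcongr
        rcases le_total a b with h | h
        · rw [max_eq_right h]; exact le_add_self
        · rw [max_eq_left h]; exact le_self_add

/-- Pointwise bound on the caloric extension for `t ∈ [1, λ²]`. -/
lemma heat_bound {lam : ℝ} (hlam : 1 < lam) (v₀ : V3 → V3)
    {t : ℝ} (ht : t ∈ Icc (1:ℝ) (lam^2)) (x : V3) :
    ENNReal.ofReal (en (heat v₀ t x)) ≤
      3 * ENNReal.ofReal ((4*Real.pi) ^ (-(3:ℝ)/2)) *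
        ∫⁻ y, ENNReal.ofReal (Real.exp (-((4*lam^2)⁻¹ * nsq (x - y)))) *
          ENNReal.ofReal (en (v₀ y)) := by
  obtain ⟨ht1, ht2⟩ := ht
  have htpos : (0:ℝ) < t := lt_of_lt_of_le one_pos ht1
  have hπ : (0:ℝ) < 4 * Real.pi := by positivity
  set c₀ : ℝ := (4*Real.pi) ^ (-(3:ℝ)/2) with hc₀def
  have hc₀ : 0 < c₀ := Real.rpow_pos_of_pos hπ _
  set J : ℝ≥0∞ := ∫⁻ y, ENNReal.ofReal (Real.exp (-((4*lam^2)⁻¹ * nsq (x - y)))) *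
      ENNReal.ofReal (en (v₀ y)) with hJ
  have hcomp : ∀ i : Fin 3, (‖heat v₀ t x i‖₊ : ℝ≥0∞) ≤ ENNReal.ofReal c₀ * J := by
    intro i
    have h1 : (‖heat v₀ t x i‖₊ : ℝ≥0∞) ≤ ∫⁻ y, ‖(4 * Real.pi * t) ^ (-(3 : ℝ) / 2) *
        Real.exp (-(nsq (x - y)) / (4 * t)) * v₀ y i‖₊ := by
      apply enorm_integral_le_lintegral_enorm
    refine le_trans h1 ?_
    rw [hJ, ← lintegral_const_mul' _ _ ENNReal.ofReal_ne_top]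
    refine lintegral_mono fun y => ?_
    have hct : (0:ℝ) < (4 * Real.pi * t) ^ (-(3 : ℝ) / 2) :=
      Real.rpow_pos_of_pos (by positivity) _
    have hexp : (0:ℝ) < Real.exp (-(nsq (x - y)) / (4 * t)) := Real.exp_pos _
    have h3 : (0:ℝ) ≤ Real.exp (-((4*lam^2)⁻¹ * nsq (x - y))) := (Real.exp_pos _).le
    rw [← enorm_eq_nnnorm, Real.enorm_eq_ofReal_abs, abs_mul, abs_mul, abs_of_pos hct, abs_of_pos hexp,
      ← ENNReal.ofReal_mul h3, ← ENNReal.ofReal_mul hc₀.le]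
    apply ENNReal.ofReal_le_ofReal
    have hb1 : (4 * Real.pi * t) ^ (-(3 : ℝ) / 2) ≤ c₀ := by
      rw [hc₀def]
      apply Real.rpow_le_rpow_of_nonpos hπ (by nlinarith) (by norm_num)
    have hb2 : Real.exp (-(nsq (x - y)) / (4 * t)) ≤
        Real.exp (-((4*lam^2)⁻¹ * nsq (x - y))) := by
      apply Real.exp_le_exp.2
      rw [neg_div, neg_le_neg_iff, inv_mul_eq_div]
      apply div_le_div_of_nonneg_left (nsq_nonneg _) (by positivity) (by nlinarith)
    have hb3 : |v₀ y i| ≤ en (v₀ y) := abs_apply_le_en _ i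
    rw [mul_assoc]
    exact mul_le_mul hb1 (mul_le_mul hb2 hb3 (abs_nonneg _) h3) (by positivity) hc₀.le
  have hsum := en_le_sum (heat v₀ t x)
  have e1 : ENNReal.ofReal (en (heat v₀ t x)) ≤
      (‖heat v₀ t x 0‖₊ : ℝ≥0∞) + ‖heat v₀ t x 1‖₊ + ‖heat v₀ t x 2‖₊ := by
    refine le_trans (ENNReal.ofReal_le_ofReal hsum) ?_
    rw [ENNReal.ofReal_add (by positivity) (abs_nonneg _),
      ENNReal.ofReal_add (abs_nonneg _) (abs_nonneg _)]
    simp [← enorm_eq_nnnorm, Real.enorm_eq_ofReal_abs]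
  refine le_trans e1 (le_trans (add_le_add (add_le_add (hcomp 0) (hcomp 1)) (hcomp 2)) ?_)
  have h9 : (3 : ℝ≥0∞) * ENNReal.ofReal c₀ * J =
      ENNReal.ofReal c₀ * J + ENNReal.ofReal c₀ * J + ENNReal.ofReal c₀ * J := by ring
  rw [h9]

/-- Corollary 3.5 for Ω = ℝ³: for RDSS data `v₀ ∈ L³_w` and q ∈ (3,∞), the function
`x ↦ sup_{1 ≤ t ≤ λ²} |e^{tΔ}v₀(x)|` belongs to L^q(ℝ³). -/
theorem rdss_heat_sup_Lq
    (lam φ : ℝ) (hlam : 1 < lam)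
    (v₀ : V3 → V3) (hmeas : Measurable v₀)
    (hweakL3 : MemWeakL3 v₀)
    (hrdss : ∀ᵐ x : V3 ∂volume,
      v₀ x = lam • (rot (-φ)).mulVec (v₀ (lam • (rot φ).mulVec x)))
    (q : ℝ) (hq : 3 < q) :
    ∫⁻ x : V3, (⨆ t ∈ Icc (1 : ℝ) (lam ^ 2),
      ENNReal.ofReal ((en (heat v₀ t x)) ^ q)) < ⊤ := by
  classical
  obtain ⟨C, hC⟩ := hweakL3
  have hq0 : (0:ℝ) ≤ q := by linarith
  have hq1 : (1:ℝ) < q := by linarith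
  have hconj : Real.HolderConjugate q (q / (q - 1)) := Real.HolderConjugate.conjExponent hq1
  -- the profile function and its truncations
  set w : V3 → ℝ := fun y => en (v₀ y) with hwdef
  have hwmeas : Measurable w := Real.continuous_sqrt.measurable.comp (measurable_nsq.comp hmeas)
  have hw0 : ∀ x, 0 ≤ w x := fun x => Real.sqrt_nonneg _
  set C' : ℝ := max C 1 with hC'def
  have hbd : ∀ σ : ℝ, 0 < σ → volume {x : V3 | σ < w x} ≤ ENNReal.ofReal (C' / σ ^ 3) := by
    intro σ hσ
    refine le_trans (hC σ hσ) (ENNReal.ofReal_le_ofReal ?_)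
    gcongr
    exact le_max_left _ _
  -- kernel and its measurability
  set a : ℝ := (4*lam^2)⁻¹ with hadef
  have hapos : 0 < a := by positivity
  set G : V3 → ℝ≥0∞ := fun z => ENNReal.ofReal (Real.exp (-(a * nsq z))) with hGdef
  have hGmeas : Measurable G :=
    (Real.measurable_exp.comp (measurable_nsq.const_mul a).neg).ennreal_ofReal
  set W1 : V3 → ℝ≥0∞ := fun y => ENNReal.ofReal (if 1 < w y then w y else 0) with hW1def
  set W2 : V3 → ℝ≥0∞ := fun y => ENNReal.ofReal (if 1 < w y then 0 else w y) with hW2def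
  have hW1meas : Measurable W1 :=
    (Measurable.ite (measurableSet_lt measurable_const hwmeas) hwmeas
      measurable_const).ennreal_ofReal
  have hW2meas : Measurable W2 :=
    (Measurable.ite (measurableSet_lt measurable_const hwmeas) measurable_const
      hwmeas).ennreal_ofReal
  have hWsum : ∀ y, ENNReal.ofReal (w y) = W1 y + W2 y := by
    intro y
    by_cases h : 1 < w y <;> simp [hW1def, hW2def, h]
  -- finiteness inputs
  have hIq : ∫⁻ z : V3, G z ^ q < ⊤ := by
    have he : ∀ z : V3, G z ^ q = ENNReal.ofReal (Real.exp (-((a*q) * nsq z))) := by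
      intro z
      rw [hGdef]
      rw [ENNReal.ofReal_rpow_of_nonneg (Real.exp_pos _).le hq0, ← Real.exp_mul]
      congr 2
      ring
    rw [lintegral_congr he]
    exact gauss_lt_top (by positivity)
  have hI1 : ∫⁻ z : V3, G z < ⊤ := gauss_lt_top hapos
  have hW1fin : ∫⁻ y, W1 y < ⊤ := trunc_big_lt_top hwmeas hw0 hbd
  have hW2fin : ∫⁻ y, (W2 y) ^ q < ⊤ := by
    have he : ∀ y : V3, (W2 y) ^ q = ENNReal.ofReal ((if 1 < w y then 0 else w y) ^ q) := by
      intro y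
      rw [hW2def, ENNReal.ofReal_rpow_of_nonneg (by by_cases h : 1 < w y <;> simp [h, hw0 y]) hq0]
    rw [lintegral_congr he]
    exact trunc_small_lt_top hwmeas hw0 (le_trans zero_le_one (le_max_right C 1)) hq hbd
  -- the two convolution pieces
  have hpart1 : ∫⁻ x : V3, (∫⁻ y, G (x - y) * W1 y) ^ q < ⊤ := by
    refine lt_of_le_of_lt (conv_pow_le₁ hconj hGmeas hW1meas) ?_
    exact ENNReal.mul_lt_top hIq (ENNReal.rpow_lt_top_of_nonneg hq0 hW1fin.ne)
  have hpart2 : ∫⁻ x : V3, (∫⁻ y, G (x - y) * W2 y) ^ q < ⊤ := by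
    refine lt_of_le_of_lt (conv_pow_le₂ hconj hGmeas hW2meas) ?_
    exact ENNReal.mul_lt_top (ENNReal.rpow_lt_top_of_nonneg hq0 hI1.ne) hW2fin
  -- measurability of the pieces
  have hH1meas : Measurable fun x : V3 => ∫⁻ y, G (x - y) * W1 y := by
    apply Measurable.lintegral_prod_right' (f := fun p : V3 × V3 => G (p.1 - p.2) * W1 p.2)
    exact (hGmeas.comp (measurable_fst.sub measurable_snd)).mul (hW1meas.comp measurable_snd)
  -- the full convolution H
  have hHsplit : ∀ x : V3, (∫⁻ y, G (x - y) * ENNReal.ofReal (w y)) =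
      (∫⁻ y, G (x - y) * W1 y) + ∫⁻ y, G (x - y) * W2 y := by
    intro x
    calc ∫⁻ y, G (x - y) * ENNReal.ofReal (w y)
        = ∫⁻ y, (G (x - y) * W1 y + G (x - y) * W2 y) :=
          lintegral_congr fun y => by rw [hWsum y, mul_add]
      _ = (∫⁻ y, G (x - y) * W1 y) + ∫⁻ y, G (x - y) * W2 y :=
          lintegral_add_left (f := fun y => G (x - y) * W1 y)
            ((hGmeas.comp (measurable_const.sub measurable_id)).mul hW1meas) _
  have hHq : ∫⁻ x : V3, (∫⁻ y, G (x - y) * ENNReal.ofReal (w y)) ^ q < ⊤ := by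
    have hpt : ∀ x : V3, (∫⁻ y, G (x - y) * ENNReal.ofReal (w y)) ^ q ≤
        2 ^ q * ((∫⁻ y, G (x - y) * W1 y) ^ q + (∫⁻ y, G (x - y) * W2 y) ^ q) := by
      intro x
      rw [hHsplit x]
      exact add_rpow_le_two_rpow _ _ hq0
    refine lt_of_le_of_lt (lintegral_mono hpt) ?_
    rw [lintegral_const_mul' _ _
      (ENNReal.rpow_lt_top_of_nonneg hq0 (by norm_num : (2:ℝ≥0∞) ≠ ⊤)).ne]
    refine ENNReal.mul_lt_top
      (ENNReal.rpow_lt_top_of_nonneg hq0 (by norm_num : (2:ℝ≥0∞) ≠ ⊤)) ?_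
    rw [lintegral_add_left (hH1meas.pow_const q)]
    exact ENNReal.add_lt_top.2 ⟨hpart1, hpart2⟩
  -- pointwise bound on the supremum
  set K : ℝ≥0∞ := 3 * ENNReal.ofReal ((4*Real.pi) ^ (-(3:ℝ)/2)) with hKdef
  have hKne : K ≠ ⊤ := by
    rw [hKdef]
    exact (ENNReal.mul_lt_top (by norm_num) ENNReal.ofReal_lt_top).ne
  have hsup : ∀ x : V3, (⨆ t ∈ Icc (1 : ℝ) (lam ^ 2),
      ENNReal.ofReal ((en (heat v₀ t x)) ^ q)) ≤
      K ^ q * (∫⁻ y, G (x - y) * ENNReal.ofReal (w y)) ^ q := by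
    intro x
    refine iSup₂_le fun t ht => ?_
    have hb := heat_bound hlam v₀ ht x
    have hb' : ENNReal.ofReal (en (heat v₀ t x)) ≤
        K * ∫⁻ y, G (x - y) * ENNReal.ofReal (w y) := hb
    rw [← ENNReal.ofReal_rpow_of_nonneg (en_nonneg _) hq0]
    calc (ENNReal.ofReal (en (heat v₀ t x))) ^ q
        ≤ (K * ∫⁻ y, G (x - y) * ENNReal.ofReal (w y)) ^ q :=
          ENNReal.rpow_le_rpow hb' hq0
      _ = K ^ q * (∫⁻ y, G (x - y) * ENNReal.ofReal (w y)) ^ q :=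
          ENNReal.mul_rpow_of_nonneg _ _ hq0
  refine lt_of_le_of_lt (lintegral_mono hsup) ?_
  rw [lintegral_const_mul' _ _ (ENNReal.rpow_lt_top_of_nonneg hq0 hKne).ne]
  exact ENNReal.mul_lt_top (ENNReal.rpow_lt_top_of_nonneg hq0 hKne) hHq
end
end
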